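/- Projection of a forbidden interval to the low sub-slice (Lemma 1, part 2): let u, v ≥ 1, let y : BitVec u, z : BitVec v, and l, h : BitVec (u+v), and consider the wrapping interval [l,h[ over BitVec (u+v) with length |[l,h[| := (h − l).toNat. If y ++ z ∉ [l,h[ and |[l,h[| > 2^(u+v) − 2^v, then z ∉ [l_z, h_z[ (a wrapping interval over BitVec v), where l_z, h_z : BitVec v satisfy l_z.toNat = l.toNat mod 2^v and h_z.toNat = h.toNat mod 2^v. -/

import Mathlib

/-- Membership in a wrapping half-open interval `[l, h[` over `BitVec w`. -/
def inInterval {w : ℕ} (t l h : BitVec w) : Prop := t - l < h - l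

private lemma natCast_sub_val {N : ℕ} [NeZero N] (a b : ℕ) (hb : b < N) :
    ((a : ZMod N) - b).val = (N - b + a) % N := by
  have h1 : ((a : ZMod N) - b) = ((N - b + a : ℕ) : ZMod N) := by
    push_cast [Nat.cast_sub hb.le]
    simp [ZMod.natCast_self]
    ring
  rw [h1, ZMod.val_natCast]

private lemma key (M N T L H : ℕ) (hM : 0 < M) (hdvd : M ∣ N) (h2 : 2 * M ≤ N)
    (hT : T < N) (hL : L < N) (hH : H < N)
    (hnot : ¬ (N - L + T) % N < (N - L + H) % N)
    (hlen : N - M < (N - L + H) % N) :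
    ¬ (M - L % M + T % M) % M < (M - L % M + H % M) % M := by
  haveI : NeZero M := ⟨hM.ne'⟩
  haveI : NeZero N := ⟨by omega⟩
  intro hcon
  have hD : ((T : ZMod N) - L).val = (N - L + T) % N := natCast_sub_val T L hL
  have hlenv : ((H : ZMod N) - L).val = (N - L + H) % N := natCast_sub_val H L hL
  set D := ((T : ZMod N) - L).val with hDdef
  set len := ((H : ZMod N) - L).val with hlendef
  rw [← hD] at hnot
  rw [← hlenv] at hlen
  have hDlt : D < N := ZMod.val_lt _
  have hlenlt : len < N := ZMod.val_lt _
  have hlenpos : 0 < len := by omega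
  have hled : len ≤ D := by omega
  have hEeq : ((T : ZMod N) - H) = ((T : ZMod N) - L) - ((H : ZMod N) - L) := by ring
  have hE : ((T : ZMod N) - H).val = D - len := by
    rw [hEeq, ZMod.val_sub hled]
  set E := ((T : ZMod N) - H).val with hEdef
  haveI hHLne : NeZero ((H : ZMod N) - L) := ⟨by
    intro h0
    rw [← ZMod.val_eq_zero] at h0
    omega⟩
  have hlenN : ((L : ZMod N) - H).val = N - len := by
    have : ((L : ZMod N) - H) = -((H : ZMod N) - L) := by ring
    rw [this, ZMod.val_neg_of_ne_zero]
  set lenN := ((L : ZMod N) - H).val with hlenNdef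
  have hElenN : E < lenN := by omega
  have hlenNM : lenN < M := by omega
  have hlenNpos : 0 < lenN := by omega
  have htrans : ∀ a : ℕ, a < N → ((a : ZMod M) - H) = ((((a : ZMod N) - H).val : ℕ) : ZMod M) := by
    intro a ha
    have h1 : ((a : ZMod N) - H).val = (N - H + a) % N := natCast_sub_val a H hH
    have h2 : (N - H + a) ≡ ((a : ZMod N) - H).val [MOD M] := by
      refine Nat.ModEq.of_dvd hdvd ?_
      rw [h1]; exact (Nat.mod_modEq _ _).symm
    have h3 : (((N - H + a : ℕ)) : ZMod M) = ((((a : ZMod N) - H).val : ℕ) : ZMod M) :=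
      (ZMod.natCast_eq_natCast_iff _ _ _).mpr h2
    rw [← h3]
    push_cast [Nat.cast_sub hH.le]
    have : ((N : ℕ) : ZMod M) = 0 := (ZMod.natCast_eq_zero_iff N M).mpr hdvd
    rw [this]; ring
  have hTM : ((T : ZMod M) - H).val = E := by
    rw [htrans T hT, ZMod.val_natCast, Nat.mod_eq_of_lt (by omega)]
  have hLM : ((L : ZMod M) - H).val = lenN := by
    rw [htrans L hL, ZMod.val_natCast, Nat.mod_eq_of_lt (by omega)]
  have hg1 : ((T : ZMod M) - L).val = (M - L % M + T % M) % M := by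
    have := natCast_sub_val (N := M) (T % M) (L % M) (Nat.mod_lt _ hM)
    rwa [ZMod.natCast_mod, ZMod.natCast_mod] at this
  have hg2 : ((H : ZMod M) - L).val = (M - L % M + H % M) % M := by
    have := natCast_sub_val (N := M) (H % M) (L % M) (Nat.mod_lt _ hM)
    rwa [ZMod.natCast_mod, ZMod.natCast_mod] at this
  rw [← hg1, ← hg2] at hcon
  haveI : NeZero ((L : ZMod M) - H) := ⟨by
    intro h0
    rw [← ZMod.val_eq_zero] at h0
    omega⟩
  have hHLM : ((H : ZMod M) - L).val = M - lenN := by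
    have h4 : ((H : ZMod M) - L) = -((L : ZMod M) - H) := by ring
    rw [h4, ZMod.val_neg_of_ne_zero, hLM]
  have h5 : ((T : ZMod M) - L) = ((T : ZMod M) - H) + ((H : ZMod M) - L) := by ring
  have h6 : ((T : ZMod M) - L).val = E + (M - lenN) := by
    rw [h5, ZMod.val_add_of_lt (by omega), hTM, hHLM]
  omega

/-- Projection of a forbidden interval to the low sub-slice (general intervals). -/
theorem forbidden_interval_project_low (u v : ℕ) (hu : 1 ≤ u) (hv : 1 ≤ v)
    (y : BitVec u) (z : BitVec v) (l h : BitVec (u + v))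
    (hnot : ¬ inInterval (y ++ z) l h)
    (hlen : 2 ^ (u + v) - 2 ^ v < (h - l).toNat) :
    ¬ inInterval z (BitVec.ofNat v (l.toNat % 2 ^ v)) (BitVec.ofNat v (h.toNat % 2 ^ v)) := by
  have hz : (y ++ z).toNat % 2 ^ v = z.toNat := by
    rw [BitVec.toNat_append, ← Nat.shiftLeft_add_eq_or_of_lt z.isLt, Nat.shiftLeft_eq, mul_comm,
      Nat.mul_add_mod, Nat.mod_eq_of_lt z.isLt]
  have hdvd : (2:ℕ) ^ v ∣ 2 ^ (u + v) := pow_dvd_pow 2 (by omega)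
  have h2 : 2 * 2 ^ v ≤ 2 ^ (u + v) := by
    calc 2 * 2^v ≤ 2^u * 2^v := by
          have : (2:ℕ) ≤ 2^u := by
            calc (2:ℕ) = 2^1 := by norm_num
            _ ≤ 2^u := Nat.pow_le_pow_right (by norm_num) hu
          exact Nat.mul_le_mul_right _ this
      _ = 2^(u+v) := (pow_add 2 u v).symm
  simp only [inInterval, BitVec.lt_def, BitVec.toNat_sub, BitVec.toNat_ofNat,
    Nat.mod_mod_of_dvd _ dvd_rfl] at hnot hlen ⊢
  rw [← hz]
  exact key (2^v) (2^(u+v)) (y ++ z).toNat l.toNat h.toNat (by positivity)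
    hdvd h2 (y ++ z).isLt l.isLt h.isLt hnot hlen
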